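/- Let G be a Lie group acting smoothly on a smooth manifold Q by a left action l^Q such that the discrete Lagrangian L_d : Q × Q → ℝ is G-invariant for the diagonal action (L_d(l^Q_g(q₀), l^Q_g(q₁)) = L_d(q₀,q₁) for all g, q₀, q₁). Then the discrete momentum map J_d : Q × Q → 𝔤*, defined by J_d(q₀,q₁)(ξ) := -D₁L_d(q₀,q₁)(ξ_Q(q₀)), is G-equivariant with respect to the diagonal action on Q × Q and the coadjoint action on 𝔤*: J_d(l^Q_g(q₀), l^Q_g(q₁)) = Ad*_{g⁻¹}(J_d(q₀,q₁)) for all g ∈ G and (q₀,q₁) ∈ Q × Q. -/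

import Mathlib

open scoped Manifold

/-- Infinitesimal generator of a left action `l : G → Q → Q` corresponding to
`ξ ∈ 𝔤 = T₁G`: the derivative at the identity of the orbit map `g ↦ l g q`. -/
noncomputable def xiGen
    {EG : Type*} [NormedAddCommGroup EG] [NormedSpace ℝ EG]
    {HG : Type*} [TopologicalSpace HG] (IG : ModelWithCorners ℝ EG HG)
    {G : Type*} [TopologicalSpace G] [ChartedSpace HG G] [Group G]
    {EQ : Type*} [NormedAddCommGroup EQ] [NormedSpace ℝ EQ]
    {HQ : Type*} [TopologicalSpace HQ] (IQ : ModelWithCorners ℝ EQ HQ)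
    {Q : Type*} [TopologicalSpace Q] [ChartedSpace HQ Q]
    (l : G → Q → Q) (ξ : TangentSpace IG (1 : G)) (q : Q) : TangentSpace IQ q :=
  mfderiv IG IQ (fun g => l g q) (1 : G) ξ

/-- The adjoint action of `g ∈ G` on `𝔤 = T₁G`: the derivative at the identity of
the conjugation `h ↦ g h g⁻¹`. -/
noncomputable def AdG
    {EG : Type*} [NormedAddCommGroup EG] [NormedSpace ℝ EG]
    {HG : Type*} [TopologicalSpace HG] (IG : ModelWithCorners ℝ EG HG)
    {G : Type*} [TopologicalSpace G] [ChartedSpace HG G] [Group G]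
    (g : G) (ξ : TangentSpace IG (1 : G)) : TangentSpace IG (1 : G) :=
  mfderiv IG IG (fun h => g * h * g⁻¹) (1 : G) ξ

/-- Partial differential of the discrete Lagrangian in the first slot. -/
noncomputable def D1Ld
    {EQ : Type*} [NormedAddCommGroup EQ] [NormedSpace ℝ EQ]
    {HQ : Type*} [TopologicalSpace HQ] (IQ : ModelWithCorners ℝ EQ HQ)
    {Q : Type*} [TopologicalSpace Q] [ChartedSpace HQ Q]
    (L : Q × Q → ℝ) (q0 q1 : Q) : TangentSpace IQ q0 →L[ℝ] ℝ :=
  mfderiv IQ 𝓘(ℝ, ℝ) (fun q => L (q, q1)) q0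

/-- the discrete momentum map
`J_d(q₀,q₁)(ξ) := -D₁L_d(q₀,q₁)(ξ_Q(q₀))` of a `G`-invariant discrete Lagrangian
is `G`-equivariant for the diagonal action on `Q × Q` and the coadjoint action on
`𝔤*`: `J_d(l_g q₀, l_g q₁)(ξ) = J_d(q₀,q₁)(Ad_{g⁻¹} ξ)`. -/
theorem discrete_momentum_map_equivariant
    {EG : Type*} [NormedAddCommGroup EG] [NormedSpace ℝ EG]
    {HG : Type*} [TopologicalSpace HG] (IG : ModelWithCorners ℝ EG HG)
    {G : Type*} [TopologicalSpace G] [ChartedSpace HG G] [Group G] [LieGroup IG (⊤ : ℕ∞) G]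
    {EQ : Type*} [NormedAddCommGroup EQ] [NormedSpace ℝ EQ]
    {HQ : Type*} [TopologicalSpace HQ] (IQ : ModelWithCorners ℝ EQ HQ)
    {Q : Type*} [TopologicalSpace Q] [ChartedSpace HQ Q] [IsManifold IQ (⊤ : ℕ∞) Q]
    (l : G → Q → Q)
    (hact : ContMDiff (IG.prod IQ) IQ (⊤ : ℕ∞) (fun p : G × Q => l p.1 p.2))
    (hact1 : ∀ q, l (1 : G) q = q)
    (hactmul : ∀ g h q, l (g * h) q = l g (l h q))
    (L : Q × Q → ℝ) (hL : ContMDiff (IQ.prod IQ) 𝓘(ℝ, ℝ) (⊤ : ℕ∞) L)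
    (hinv : ∀ (g : G) (q0 q1 : Q), L (l g q0, l g q1) = L (q0, q1)) :
    ∀ (g : G) (q0 q1 : Q) (ξ : TangentSpace IG (1 : G)),
      -(D1Ld IQ L (l g q0) (l g q1) (xiGen IG IQ l ξ (l g q0)))
        = -(D1Ld IQ L q0 q1 (xiGen IG IQ l (AdG IG g⁻¹ ξ) q0)) := by
  intro g q0 q1 ξ
  have horb : ∀ q : Q, ContMDiff IG IQ (⊤ : ℕ∞) (fun h : G => l h q) := fun q =>
    hact.comp (contMDiff_id.prodMk contMDiff_const)
  have hc : ContMDiff IG IG (⊤ : ℕ∞) (fun h : G => g⁻¹ * h * g) :=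
    (contMDiff_const.mul contMDiff_id).mul contMDiff_const
  have hF : ∀ p : Q, ContMDiff IQ 𝓘(ℝ, ℝ) (⊤ : ℕ∞) (fun q : Q => L (q, p)) := fun p =>
    hL.comp (contMDiff_id.prodMk contMDiff_const)
  have congrPt : ∀ (f : Q → ℝ) {x y : Q}, x = y →
      mfderiv IQ 𝓘(ℝ, ℝ) f x = mfderiv IQ 𝓘(ℝ, ℝ) f y := by
    intro f x y h; subst h; rfl
  have congrPtG : ∀ (f : G → ℝ) {x y : G}, x = y →
      mfderiv IG 𝓘(ℝ, ℝ) f x = mfderiv IG 𝓘(ℝ, ℝ) f y := by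
    intro f x y h; subst h; rfl
  have key : ∀ h : G, L (l h (l g q0), l g q1) = L (l (g⁻¹ * h * g) q0, q1) := by
    intro h
    have e : l h (l g q0) = l g (l (g⁻¹ * h * g) q0) := by
      rw [← hactmul, ← hactmul]
      congr 1
      group
    rw [e, hinv]
  have e2 : ((fun q : Q => L (q, l g q1)) ∘ (fun h : G => l h (l g q0)))
      = fun h : G => L (l (g⁻¹ * h * g) q0, q1) := funext fun h => key h
  have e1 : mfderiv IG 𝓘(ℝ, ℝ)
        ((fun q : Q => L (q, l g q1)) ∘ (fun h : G => l h (l g q0))) (1 : G)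
      = (mfderiv IQ 𝓘(ℝ, ℝ) (fun q : Q => L (q, l g q1)) (l (1 : G) (l g q0))).comp
        (mfderiv IG IQ (fun h : G => l h (l g q0)) (1 : G)) :=
    mfderiv_comp _ ((hF (l g q1)).mdifferentiableAt (by simp))
      ((horb (l g q0)).mdifferentiableAt (by simp))
  have lhs : D1Ld IQ L (l g q0) (l g q1) (xiGen IG IQ l ξ (l g q0))
      = mfderiv IG 𝓘(ℝ, ℝ) (fun h : G => L (l (g⁻¹ * h * g) q0, q1)) (1 : G) ξ := by
    calc (D1Ld IQ L (l g q0) (l g q1) (xiGen IG IQ l ξ (l g q0)) : ℝ)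
        = @id ℝ ((mfderiv IQ 𝓘(ℝ, ℝ) (fun q : Q => L (q, l g q1)) (l (1 : G) (l g q0)))
            ((mfderiv IG IQ (fun h : G => l h (l g q0)) (1 : G)) ξ) : ℝ) := by
          rw [congrPt (fun q : Q => L (q, l g q1)) (hact1 (l g q0))]
          rfl
      _ = @id ℝ (mfderiv IG 𝓘(ℝ, ℝ)
            ((fun q : Q => L (q, l g q1)) ∘ (fun h : G => l h (l g q0))) (1 : G) ξ : ℝ) :=
          DFunLike.congr_fun e1.symm ξ
      _ = @id ℝ (mfderiv IG 𝓘(ℝ, ℝ) (fun h : G => L (l (g⁻¹ * h * g) q0, q1)) (1 : G) ξ : ℝ) := by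
          rw [e2]
  have e3 : mfderiv IG 𝓘(ℝ, ℝ)
        ((fun q : Q => L (q, q1)) ∘ (fun h : G => l h q0)) (1 : G)
      = (mfderiv IQ 𝓘(ℝ, ℝ) (fun q : Q => L (q, q1)) (l (1 : G) q0)).comp
        (mfderiv IG IQ (fun h : G => l h q0) (1 : G)) :=
    mfderiv_comp _ ((hF q1).mdifferentiableAt (by simp))
      ((horb q0).mdifferentiableAt (by simp))
  have hFpsi : ContMDiff IG 𝓘(ℝ, ℝ) (⊤ : ℕ∞) ((fun q : Q => L (q, q1)) ∘ (fun h : G => l h q0)) :=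
    (hF q1).comp (horb q0)
  have hone : (g⁻¹ * (1 : G) * g) = (1 : G) := by group
  have e4 : mfderiv IG 𝓘(ℝ, ℝ)
        (((fun q : Q => L (q, q1)) ∘ (fun h : G => l h q0)) ∘ (fun h : G => g⁻¹ * h * g)) (1 : G)
      = (mfderiv IG 𝓘(ℝ, ℝ) ((fun q : Q => L (q, q1)) ∘ (fun h : G => l h q0))
          (g⁻¹ * (1 : G) * g)).comp
        (mfderiv IG IG (fun h : G => g⁻¹ * h * g) (1 : G)) :=
    mfderiv_comp _ (hFpsi.mdifferentiableAt (by simp)) (hc.mdifferentiableAt (by simp))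
  have e5 : (((fun q : Q => L (q, q1)) ∘ (fun h : G => l h q0)) ∘ (fun h : G => g⁻¹ * h * g))
      = fun h : G => L (l (g⁻¹ * h * g) q0, q1) := rfl
  have hAd : AdG IG g⁻¹ ξ = mfderiv IG IG (fun h : G => g⁻¹ * h * g) (1 : G) ξ := by
    have e : (fun h : G => g⁻¹ * h * g⁻¹⁻¹) = fun h : G => g⁻¹ * h * g := by
      funext h; rw [inv_inv]
    show mfderiv IG IG (fun h : G => g⁻¹ * h * g⁻¹⁻¹) (1 : G) ξ = _
    rw [e]
    rfl
  have rhs : D1Ld IQ L q0 q1 (xiGen IG IQ l (AdG IG g⁻¹ ξ) q0)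
      = mfderiv IG 𝓘(ℝ, ℝ) (fun h : G => L (l (g⁻¹ * h * g) q0, q1)) (1 : G) ξ := by
    calc (D1Ld IQ L q0 q1 (xiGen IG IQ l (AdG IG g⁻¹ ξ) q0) : ℝ)
        = @id ℝ ((mfderiv IQ 𝓘(ℝ, ℝ) (fun q : Q => L (q, q1)) (l (1 : G) q0))
            ((mfderiv IG IQ (fun h : G => l h q0) (1 : G))
              ((mfderiv IG IG (fun h : G => g⁻¹ * h * g) (1 : G)) ξ)) : ℝ) := by
          rw [congrPt (fun q : Q => L (q, q1)) (hact1 q0), ← hAd]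
          rfl
      _ = @id ℝ (mfderiv IG 𝓘(ℝ, ℝ) ((fun q : Q => L (q, q1)) ∘ (fun h : G => l h q0)) (1 : G)
            ((mfderiv IG IG (fun h : G => g⁻¹ * h * g) (1 : G)) ξ) : ℝ) :=
          DFunLike.congr_fun e3.symm _
      _ = @id ℝ ((mfderiv IG 𝓘(ℝ, ℝ) ((fun q : Q => L (q, q1)) ∘ (fun h : G => l h q0))
            (g⁻¹ * (1 : G) * g))
            ((mfderiv IG IG (fun h : G => g⁻¹ * h * g) (1 : G)) ξ) : ℝ) := by
          rw [congrPtG ((fun q : Q => L (q, q1)) ∘ (fun h : G => l h q0)) hone]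
          rfl
      _ = @id ℝ (mfderiv IG 𝓘(ℝ, ℝ)
            (((fun q : Q => L (q, q1)) ∘ (fun h : G => l h q0)) ∘ (fun h : G => g⁻¹ * h * g))
            (1 : G) ξ : ℝ) := DFunLike.congr_fun e4.symm ξ
      _ = @id ℝ (mfderiv IG 𝓘(ℝ, ℝ) (fun h : G => L (l (g⁻¹ * h * g) q0, q1)) (1 : G) ξ : ℝ) := by
          rw [e5]
  rw [lhs, rhs]
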